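/- For any (p,q) double form ω on an oriented n-dimensional Euclidean vector space, the double Hodge star of ω equals the interior product of ω against g^n/n!: *ω = i_ω(g^n/n!). -/

import Mathlib

/-
Double forms on the Euclidean space ℝⁿ, following Labbi's formalism.
A (p,q) double form is modelled as a real-valued function of a p-tuple and a
q-tuple of vectors (the relevant ones being those multilinear and alternating
in each block, i.e. bilinear forms on Λ^p V × Λ^q V).
-/

open scoped BigOperators RealInnerProductSpace

noncomputable section

abbrev EucV (n : ℕ) := EuclideanSpace ℝ (Fin n)

/-- A (p,q) double form on ℝⁿ: a bilinear form on Λ^p V × Λ^q V, viewed as a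
multilinear form skew-symmetric in the first p and in the last q arguments. -/
abbrev DF (n p q : ℕ) := (Fin p → EucV n) → (Fin q → EucV n) → ℝ

variable {n : ℕ}

/-- standard orthonormal basis of ℝⁿ -/
def bv (n : ℕ) (i : Fin n) : EucV n := EuclideanSpace.single i 1

/-- strictly increasing multi-indices of length p -/
def Incr (n p : ℕ) : Finset (Fin p → Fin n) :=
  Finset.univ.filter (fun f => ∀ a b : Fin p, a < b → f a < f b)

/-- sign of a permutation, as a real number -/
def sgn {m : ℕ} (σ : Equiv.Perm (Fin m)) : ℝ := ((Equiv.Perm.sign σ : ℤ) : ℝ)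

/-- exterior product of double forms:
(θ₁⊗θ₂)(θ₃⊗θ₄) = (θ₁∧θ₃)⊗(θ₂∧θ₄). -/
def extMul {p q r s : ℕ} (ω : DF n p q) (η : DF n r s) : DF n (p + r) (q + s) :=
  fun x y =>
    (p.factorial * r.factorial * q.factorial * s.factorial : ℝ)⁻¹ *
      ∑ σ : Equiv.Perm (Fin (p + r)), ∑ τ : Equiv.Perm (Fin (q + s)),
        sgn σ * sgn τ *
          (ω (fun i => x (σ (Fin.castAdd r i))) (fun j => y (τ (Fin.castAdd s j))) *
            η (fun i => x (σ (Fin.natAdd p i))) (fun j => y (τ (Fin.natAdd q j))))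

/-- composition (Greub) product of double forms: for ω₁ ∈ D^{p,q}, ω₂ ∈ D^{r,p},
(ω₁ ∘ ω₂)(u,v) = Σ_{i₁<…<i_p} ω₂(u, e_I) ω₁(e_I, v); it corresponds to the
composition of the associated operators on ΛV. -/
def compDF {p q r : ℕ} (ω₁ : DF n p q) (ω₂ : DF n r p) : DF n r q :=
  fun u v => ∑ f ∈ Incr n p, ω₂ u (fun i => bv n (f i)) * ω₁ (fun i => bv n (f i)) v

/-- transpose of a double form -/
def transDF {p q : ℕ} (ω : DF n p q) : DF n q p := fun u v => ω v u

/-- re-indexing cast of a double form -/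
def castDF {p q p' q' : ℕ} (hp : p = p') (hq : q = q') (ω : DF n p q) : DF n p' q' :=
  fun x y => ω (x ∘ Fin.cast hp) (y ∘ Fin.cast hq)

/-- Ricci contraction of double forms -/
def contractDF {p q : ℕ} (ω : DF n (p + 1) (q + 1)) : DF n p q :=
  fun x y => ∑ i : Fin n, ω (Fin.cons (bv n i) x) (Fin.cons (bv n i) y)

/-- iterated contraction c^k -/
def contractIterDF {p q : ℕ} : (k : ℕ) → DF n (p + k) (q + k) → DF n p q
  | 0, ω => ω
  | k + 1, ω => contractIterDF k (contractDF ω)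

/-- interior product i_ψ of double forms (the adjoint of left exterior
multiplication by ψ): for ψ ∈ D^{r,s} and ω ∈ D^{r+p,s+q},
(i_ψ ω)(x;y) = Σ_{I,J increasing} ψ(e_I;e_J) ω(e_I,x;e_J,y). -/
def interiorDF {r s p q : ℕ} (ψ : DF n r s) (ω : DF n (r + p) (s + q)) : DF n p q :=
  fun x y =>
    ∑ f ∈ Incr n r, ∑ g ∈ Incr n s,
      ψ (fun i => bv n (f i)) (fun j => bv n (g j)) *
        ω (Fin.append (fun i => bv n (f i)) x) (Fin.append (fun j => bv n (g j)) y)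

/-- inner product of (p,q) double forms, induced by the inner products of the
exterior powers -/
def innerDF {p q : ℕ} (ω η : DF n p q) : ℝ :=
  ∑ f ∈ Incr n p, ∑ g ∈ Incr n q,
    ω (fun i => bv n (f i)) (fun j => bv n (g j)) *
      η (fun i => bv n (f i)) (fun j => bv n (g j))

/-- the metric of ℝⁿ as a (1,1) double form -/
def gDF (n : ℕ) : DF n 1 1 := fun u v => (inner ℝ (u 0) (v 0) : ℝ)

/-- exterior powers of a (1,1) double form -/
def powDF (h : DF n 1 1) : (p : ℕ) → DF n p p
  | 0 => fun _ _ => 1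
  | p + 1 => extMul (powDF h p) h

/-- exterior product h₁h₂⋯h_p of a family of (1,1) double forms -/
def extProdDF : {p : ℕ} → (Fin p → DF n 1 1) → DF n p p
  | 0, _ => fun _ _ => 1
  | p + 1, h => extMul (extProdDF fun i => h i.castSucc) (h (Fin.last p))

/-- determinant (volume form) of an n-tuple of vectors of ℝⁿ -/
def volDF (n : ℕ) (v : Fin n → EucV n) : ℝ :=
  Matrix.det (Matrix.of fun i j => (inner ℝ (bv n i) (v j) : ℝ))

/-- double Hodge star operator on double forms:
*(θ₁⊗θ₂) = (*θ₁)⊗(*θ₂), given here by the classical formula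
(*α)(x) = Σ_{I increasing} α(e_I) vol(e_I, x) applied in each slot. -/
def starDF {p q : ℕ} (hp : p ≤ n) (hq : q ≤ n) (ω : DF n p q) : DF n (n - p) (n - q) :=
  fun x y =>
    ∑ f ∈ Incr n p, ∑ g ∈ Incr n q,
      ω (fun i => bv n (f i)) (fun j => bv n (g j)) *
        volDF n (Fin.append (fun i => bv n (f i)) x ∘ Fin.cast (Nat.add_sub_cancel' hp).symm) *
        volDF n (Fin.append (fun j => bv n (g j)) y ∘ Fin.cast (Nat.add_sub_cancel' hq).symm)

/-- the endomorphism h̄ associated to a bilinear form h: ⟪h̄ v, w⟫ = h(v,w) -/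
def hbar (h : DF n 1 1) (v : EucV n) : EucV n :=
  ∑ j : Fin n, h ![v] ![bv n j] • bv n j

/-- the adjoint endomorphism h̄*: ⟪v, h̄* w⟫ = h(v,w) -/
def hbarAdj (h : DF n 1 1) (v : EucV n) : EucV n :=
  ∑ i : Fin n, h ![bv n i] ![v] • bv n i

/-- the right extension ĥ_R = id ⊗ ĥ of (the exterior-algebra extension ĥ of) h̄,
acting on double forms via the metric identification with double vectors -/
def hhatR {p q : ℕ} (h : DF n 1 1) (ω : DF n p q) : DF n p q :=
  fun x y => ω x (fun j => hbarAdj h (y j))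

/-- determinant of (the endomorphism associated to) a bilinear form -/
def detDF (h : DF n 1 1) : ℝ :=
  Matrix.det (Matrix.of fun i j : Fin n => h ![bv n i] ![bv n j])

/-- omit one member of a family -/
def omit1 {α : Sort*} {p : ℕ} (h : Fin (p + 1) → α) (j : Fin (p + 1)) : Fin p → α :=
  fun i => h (j.succAbove i)

/-- omit two members of a family -/
def omit2 {α : Sort*} {p : ℕ} (h : Fin (p + 2) → α) (j k : Fin (p + 2)) (hjk : j < k) :
    Fin p → α :=
  omit1 (omit1 h k) ⟨j.1, by have h1 : j.1 < k.1 := hjk; have h2 : k.1 < p + 2 := k.isLt; omega⟩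

/-- the first Bianchi map 𝔖 : D^{p,q+1} → D^{p+1,q} -/
def bianchiDF {p q : ℕ} (ω : DF n p (q + 1)) : DF n (p + 1) q :=
  fun x y =>
    (p.factorial : ℝ)⁻¹ *
      ∑ σ : Equiv.Perm (Fin (p + 1)),
        sgn σ * ω (fun i => x (σ i.castSucc)) (Fin.cons (x (σ (Fin.last p))) y)

/-- the alternating operator Alt : D^{p,p} → Λ^{2p} -/
def altDF {p : ℕ} (ω : DF n p p) : (Fin (p + p) → EucV n) → ℝ :=
  fun v =>
    ((p + p).factorial : ℝ)⁻¹ *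
      ∑ σ : Equiv.Perm (Fin (p + p)),
        sgn σ * ω (fun i => v (σ (Fin.castAdd p i))) (fun i => v (σ (Fin.natAdd p i)))

/-- exterior powers of a (2,2) double form -/
def pow2DF (R : DF n 2 2) : (k : ℕ) → DF n (2 * k) (2 * k)
  | 0 => fun _ _ => 1
  | k + 1 => extMul (pow2DF R k) R

/-- the diagonal simple double form (v₁∧…∧v_p) ⊗ (v₁∧…∧v_p), as a bilinear form -/
def simpleDiag {p : ℕ} (v : Fin p → EucV n) : DF n p p :=
  fun x y =>
    Matrix.det (Matrix.of fun i j => (inner ℝ (v i) (x j) : ℝ)) *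
      Matrix.det (Matrix.of fun i j => (inner ℝ (v i) (y j) : ℝ))



section Stmt9Aux

lemma sgn_mul' {m : ℕ} (σ τ : Equiv.Perm (Fin m)) : sgn (σ * τ) = sgn σ * sgn τ := by
  unfold sgn; rw [Equiv.Perm.sign_mul]; push_cast; ring

lemma sgn_sq {m : ℕ} (σ : Equiv.Perm (Fin m)) : sgn σ * sgn σ = 1 := by
  unfold sgn; rw [← Int.cast_mul, ← Units.val_mul, Int.units_mul_self]; norm_num

def Dm {n m : ℕ} (x y : Fin m → EucV n) : ℝ :=
  (Matrix.of fun i j => (inner ℝ (x i) (y j) : ℝ)).det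

lemma det_row {n m : ℕ} (x y : Fin m → EucV n) :
    (∑ τ : Equiv.Perm (Fin m), sgn τ * ∏ i, (inner ℝ (x i) (y (τ i)) : ℝ)) = Dm x y := by
  rw [Dm, ← Matrix.det_transpose, Matrix.det_apply']
  rfl


lemma T_eq {n m : ℕ} (x y : Fin m → EucV n) :
    (∑ σ : Equiv.Perm (Fin m), ∑ τ : Equiv.Perm (Fin m),
      sgn σ * sgn τ * ∏ i, (inner ℝ (x (σ i)) (y (τ i)) : ℝ))
    = m.factorial * Dm x y := by
  have key : ∀ σ : Equiv.Perm (Fin m),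
      (∑ τ : Equiv.Perm (Fin m), sgn τ * ∏ i, (inner ℝ (x (σ i)) (y (τ i)) : ℝ))
      = sgn σ * Dm x y := by
    intro σ
    have h1 : (∑ τ : Equiv.Perm (Fin m), sgn τ * ∏ i, (inner ℝ (x (σ i)) (y (τ i)) : ℝ))
        = ∑ τ : Equiv.Perm (Fin m), sgn σ * (sgn τ * ∏ i, (inner ℝ (x i) (y (τ i)) : ℝ)) := by
      refine Fintype.sum_equiv (Equiv.mulRight σ⁻¹) _ _ (fun τ => ?_)
      simp only [Equiv.coe_mulRight, sgn_mul', Equiv.Perm.mul_apply]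
      have hp : (∏ i, (inner ℝ (x i) (y (τ (σ⁻¹ i))) : ℝ)) = ∏ k, (inner ℝ (x (σ k)) (y (τ k)) : ℝ) := by
        rw [← Equiv.prod_comp σ (fun i => (inner ℝ (x i) (y (τ (σ⁻¹ i))) : ℝ))]
        simp
      rw [hp]
      have hinv : sgn σ⁻¹ = sgn σ := by unfold sgn; rw [Equiv.Perm.sign_inv]
      rw [hinv]
      linear_combination (-(sgn τ * ∏ k, (inner ℝ (x (σ k)) (y (τ k)) : ℝ))) * (sgn_sq σ)
    rw [h1, ← Finset.mul_sum, det_row]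
  calc (∑ σ : Equiv.Perm (Fin m), ∑ τ : Equiv.Perm (Fin m),
      sgn σ * sgn τ * ∏ i, (inner ℝ (x (σ i)) (y (τ i)) : ℝ))
      = ∑ σ : Equiv.Perm (Fin m), sgn σ * (sgn σ * Dm x y) := by
        refine Finset.sum_congr rfl fun σ _ => ?_
        rw [← key σ, Finset.mul_sum]
        exact Finset.sum_congr rfl fun τ _ => by ring
    _ = ∑ _σ : Equiv.Perm (Fin m), Dm x y := by
        refine Finset.sum_congr rfl fun σ _ => ?_
        rw [← mul_assoc, sgn_sq, one_mul]
    _ = m.factorial * Dm x y := by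
        rw [Finset.sum_const, Finset.card_univ, Fintype.card_perm, Fintype.card_fin,
          nsmul_eq_mul]

def extP {p : ℕ} (α : Equiv.Perm (Fin p)) : Equiv.Perm (Fin (p + 1)) :=
  (finSumFinEquiv (m := p) (n := 1)).permCongr (α.sumCongr (Equiv.refl (Fin 1)))

lemma extP_castAdd {p : ℕ} (α : Equiv.Perm (Fin p)) (i : Fin p) :
    extP α (Fin.castAdd 1 i) = Fin.castAdd 1 (α i) := by
  simp [extP, Equiv.permCongr_apply, finSumFinEquiv_symm_apply_castAdd]

lemma extP_natAdd {p : ℕ} (α : Equiv.Perm (Fin p)) (j : Fin 1) :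
    extP α (Fin.natAdd p j) = Fin.natAdd p j := by
  simp [extP, Equiv.permCongr_apply, finSumFinEquiv_symm_apply_natAdd]

lemma sgn_extP {p : ℕ} (α : Equiv.Perm (Fin p)) : sgn (extP α) = sgn α := by
  unfold sgn extP
  rw [Equiv.Perm.sign_permCongr, Equiv.Perm.sign_sumCongr]
  simp


set_option maxHeartbeats 2000000 in
lemma powDF_apply {n : ℕ} (m : ℕ) (x y : Fin m → EucV n) :
    powDF (gDF n) m x y = ∑ σ : Equiv.Perm (Fin m), ∑ τ : Equiv.Perm (Fin m),
      sgn σ * sgn τ * ∏ i, (inner ℝ (x (σ i)) (y (τ i)) : ℝ) := by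
  induction m with
  | zero =>
      simp [powDF, sgn, Finset.univ_unique]
  | succ p ih =>
      have h0 : ((p.factorial : ℝ)) ≠ 0 := Nat.cast_ne_zero.mpr p.factorial_ne_zero
      have hlast : (Fin.natAdd p (0 : Fin 1)) = Fin.last p := by ext; simp
      have hcard : (Finset.univ : Finset (Equiv.Perm (Fin p))).card = p.factorial := by
        rw [Finset.card_univ, Fintype.card_perm, Fintype.card_fin]
      show extMul (powDF (gDF n) p) (gDF n) x y = _
      unfold extMul
      -- notation for the inner sum
      have main :
          (∑ σ : Equiv.Perm (Fin (p + 1)), ∑ τ : Equiv.Perm (Fin (p + 1)),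
            sgn σ * sgn τ *
              (powDF (gDF n) p (fun i => x (σ (Fin.castAdd 1 i))) (fun j => y (τ (Fin.castAdd 1 j))) *
                gDF n (fun i => x (σ (Fin.natAdd p i))) (fun j => y (τ (Fin.natAdd p j)))))
          = (p.factorial : ℝ) * ((p.factorial : ℝ) *
              ∑ σ : Equiv.Perm (Fin (p + 1)), ∑ τ : Equiv.Perm (Fin (p + 1)),
                sgn σ * sgn τ * ∏ k, (inner ℝ (x (σ k)) (y (τ k)) : ℝ)) := by
        calc
          (∑ σ : Equiv.Perm (Fin (p + 1)), ∑ τ : Equiv.Perm (Fin (p + 1)),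
            sgn σ * sgn τ *
              (powDF (gDF n) p (fun i => x (σ (Fin.castAdd 1 i))) (fun j => y (τ (Fin.castAdd 1 j))) *
                gDF n (fun i => x (σ (Fin.natAdd p i))) (fun j => y (τ (Fin.natAdd p j)))))
              = ∑ σ : Equiv.Perm (Fin (p + 1)), ∑ τ : Equiv.Perm (Fin (p + 1)),
                  ∑ α : Equiv.Perm (Fin p), ∑ β : Equiv.Perm (Fin p),
                    sgn σ * sgn τ * sgn α * sgn β *
                      ((∏ i, (inner ℝ (x (σ (Fin.castAdd 1 (α i)))) (y (τ (Fin.castAdd 1 (β i)))) : ℝ)) *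
                        (inner ℝ (x (σ (Fin.natAdd p 0))) (y (τ (Fin.natAdd p 0))) : ℝ)) := by
                refine Finset.sum_congr rfl fun σ _ => Finset.sum_congr rfl fun τ _ => ?_
                rw [ih]
                show sgn σ * sgn τ *
                    ((∑ α : Equiv.Perm (Fin p), ∑ β : Equiv.Perm (Fin p),
                        sgn α * sgn β * ∏ i, (inner ℝ (x (σ (Fin.castAdd 1 (α i)))) (y (τ (Fin.castAdd 1 (β i)))) : ℝ)) *
                      (inner ℝ (x (σ (Fin.natAdd p 0))) (y (τ (Fin.natAdd p 0))) : ℝ)) = _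
                rw [Finset.sum_mul, Finset.mul_sum]
                refine Finset.sum_congr rfl fun α _ => ?_
                rw [Finset.sum_mul, Finset.mul_sum]
                exact Finset.sum_congr rfl fun β _ => by ring
          _ = ∑ α : Equiv.Perm (Fin p), ∑ σ : Equiv.Perm (Fin (p + 1)),
                ∑ τ : Equiv.Perm (Fin (p + 1)), ∑ β : Equiv.Perm (Fin p),
                  sgn σ * sgn τ * sgn α * sgn β *
                    ((∏ i, (inner ℝ (x (σ (Fin.castAdd 1 (α i)))) (y (τ (Fin.castAdd 1 (β i)))) : ℝ)) *
                      (inner ℝ (x (σ (Fin.natAdd p 0))) (y (τ (Fin.natAdd p 0))) : ℝ)) := by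
                exact Eq.trans (Finset.sum_congr rfl fun σ _ => Finset.sum_comm)
                  Finset.sum_comm
          _ = ∑ α : Equiv.Perm (Fin p), ∑ σ : Equiv.Perm (Fin (p + 1)),
                ∑ τ : Equiv.Perm (Fin (p + 1)), ∑ β : Equiv.Perm (Fin p),
                  sgn σ * sgn τ * sgn β *
                    ((∏ i, (inner ℝ (x (σ (Fin.castAdd 1 i))) (y (τ (Fin.castAdd 1 (β i)))) : ℝ)) *
                      (inner ℝ (x (σ (Fin.natAdd p 0))) (y (τ (Fin.natAdd p 0))) : ℝ)) := by
                refine Finset.sum_congr rfl fun α _ => ?_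
                refine Fintype.sum_equiv (Equiv.mulRight (extP α)) _ _ (fun σ => ?_)
                refine Finset.sum_congr rfl fun τ _ => Finset.sum_congr rfl fun β _ => ?_
                simp only [Equiv.coe_mulRight, Equiv.Perm.mul_apply, sgn_mul', sgn_extP,
                  extP_castAdd, extP_natAdd]
                ring
          _ = (p.factorial : ℝ) * ∑ σ : Equiv.Perm (Fin (p + 1)),
                ∑ τ : Equiv.Perm (Fin (p + 1)), ∑ β : Equiv.Perm (Fin p),
                  sgn σ * sgn τ * sgn β *
                    ((∏ i, (inner ℝ (x (σ (Fin.castAdd 1 i))) (y (τ (Fin.castAdd 1 (β i)))) : ℝ)) *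
                      (inner ℝ (x (σ (Fin.natAdd p 0))) (y (τ (Fin.natAdd p 0))) : ℝ)) := by
                rw [Finset.sum_const, hcard, nsmul_eq_mul]
          _ = (p.factorial : ℝ) * ∑ σ : Equiv.Perm (Fin (p + 1)),
                ∑ β : Equiv.Perm (Fin p), ∑ τ : Equiv.Perm (Fin (p + 1)),
                  sgn σ * sgn τ * sgn β *
                    ((∏ i, (inner ℝ (x (σ (Fin.castAdd 1 i))) (y (τ (Fin.castAdd 1 (β i)))) : ℝ)) *
                      (inner ℝ (x (σ (Fin.natAdd p 0))) (y (τ (Fin.natAdd p 0))) : ℝ)) := by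
                congr 1
                exact Finset.sum_congr rfl fun σ _ => Finset.sum_comm
          _ = (p.factorial : ℝ) * ∑ σ : Equiv.Perm (Fin (p + 1)),
                ∑ β : Equiv.Perm (Fin p), ∑ τ : Equiv.Perm (Fin (p + 1)),
                  sgn σ * sgn τ *
                    ((∏ i, (inner ℝ (x (σ (Fin.castAdd 1 i))) (y (τ (Fin.castAdd 1 i))) : ℝ)) *
                      (inner ℝ (x (σ (Fin.natAdd p 0))) (y (τ (Fin.natAdd p 0))) : ℝ)) := by
                congr 1
                refine Finset.sum_congr rfl fun σ _ => Finset.sum_congr rfl fun β _ => ?_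
                refine Fintype.sum_equiv (Equiv.mulRight (extP β)) _ _ (fun τ => ?_)
                simp only [Equiv.coe_mulRight, Equiv.Perm.mul_apply, sgn_mul', sgn_extP,
                  extP_castAdd, extP_natAdd]
                ring
          _ = (p.factorial : ℝ) * ((p.factorial : ℝ) *
                ∑ σ : Equiv.Perm (Fin (p + 1)), ∑ τ : Equiv.Perm (Fin (p + 1)),
                  sgn σ * sgn τ * ∏ k, (inner ℝ (x (σ k)) (y (τ k)) : ℝ)) := by
                congr 1
                rw [Finset.mul_sum]
                refine Finset.sum_congr rfl fun σ _ => ?_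
                rw [Finset.sum_const, hcard, nsmul_eq_mul]
                congr 1
                refine Finset.sum_congr rfl fun τ _ => ?_
                rw [Fin.prod_univ_castSucc]
                rw [hlast]
                have hcs : ∀ i : Fin p, i.castSucc = Fin.castAdd 1 i := fun _ => rfl
                simp only [hcs]
                try ring
      rw [main]
      rw [Nat.factorial_one]
      push_cast
      field_simp

lemma Dm_eq {n : ℕ} (x y : Fin n → EucV n) : Dm x y = volDF n x * volDF n y := by
  have hM : (Matrix.of fun i j => (inner ℝ (x i) (y j) : ℝ)) =
      (Matrix.of fun i j => (inner ℝ (bv n i) (x j) : ℝ)).transpose *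
        (Matrix.of fun i j => (inner ℝ (bv n i) (y j) : ℝ)) := by
    ext i j
    simp [Matrix.mul_apply, Matrix.transpose_apply, bv, EuclideanSpace.inner_single_left,
      PiLp.inner_apply, RCLike.inner_apply]
    exact Finset.sum_congr rfl fun _ _ => mul_comm _ _
  rw [Dm, hM, Matrix.det_mul, Matrix.det_transpose, volDF, volDF]

lemma powDF_eq_vol {n : ℕ} (u v : Fin n → EucV n) :
    powDF (gDF n) n u v = n.factorial * (volDF n u * volDF n v) := by
  rw [powDF_apply, T_eq, ← Dm_eq]

end Stmt9Aux

/-- for a (p,q) double form ω, *ω = i_ω(gⁿ/n!). -/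
theorem stmt9 (n p q : ℕ) (hp : p ≤ n) (hq : q ≤ n) (ω : DF n p q) :
    starDF hp hq ω =
      interiorDF ω
        (castDF (show n = p + (n - p) by omega) (show n = q + (n - q) by omega)
          ((n.factorial : ℝ)⁻¹ • powDF (gDF n) n)) := by
  funext x y
  unfold starDF interiorDF
  refine Finset.sum_congr rfl fun f _ => Finset.sum_congr rfl fun g _ => ?_
  simp only [castDF, Pi.smul_apply, smul_eq_mul]
  rw [powDF_eq_vol]
  rw [inv_mul_cancel_left₀ (Nat.cast_ne_zero.mpr n.factorial_ne_zero : ((n.factorial : ℝ)) ≠ 0)]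
  rw [mul_assoc]
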